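/- Let D be a Ferrers diagram of order n, let 2 ≤ d ≤ n, and let j ∈ {0,…,d−1} be such that (D,d) is j-Singleton. Let D' ⊆ D be a Ferrers diagram of order n such that D ∩ L_{n,d,j} = D' ∩ L_{n,d,j}. Then (D',d) is j-Singleton. -/

import Mathlib

/-- A Ferrers diagram of order `n`, given by its column heights
`c 0 ≤ c 1 ≤ … ≤ c (n-1) ≤ n` (so `c j` is the number of dots in the (j+1)-st column). -/
def IsFerrersDiagram (n : ℕ) (c : Fin n → ℕ) : Prop :=
  Monotone c ∧ ∀ i, c i ≤ n

/-- Extension of the column-height function to `ℕ`, by zero. -/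
def colExt (n : ℕ) (c : Fin n → ℕ) : ℕ → ℕ :=
  fun k => if h : k < n then c ⟨k, h⟩ else 0

/-- `ν_j(D,d) = Σ_{i=1}^{n-j} max{0, c_i - d + 1 + j}` (truncated subtraction gives the max). -/
def nuJ (n d j : ℕ) (c : Fin n → ℕ) : ℕ :=
  ∑ i ∈ Finset.range (n - j), (colExt n c i + 1 + j - d)

/-- `ν_min(D,d) = min{ν_j(D,d) : 0 ≤ j ≤ d-1}`. -/
noncomputable def nuMin (n d : ℕ) (c : Fin n → ℕ) : ℕ :=
  sInf {k | ∃ j < d, k = nuJ n d j c}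

/-- A Ferrers diagram is monotone if `c (i+1) > c i` whenever `0 < c i < n`. -/
def DiagMonotone (n : ℕ) (c : Fin n → ℕ) : Prop :=
  ∀ i : Fin n, ∀ hi : (i : ℕ) + 1 < n, 0 < c i → c i < n → c i < c ⟨(i : ℕ) + 1, hi⟩

/-- A Ferrers diagram is convex if `c (i+1) - c i ≤ 1` for all `i`. -/
def DiagConvex (n : ℕ) (c : Fin n → ℕ) : Prop :=
  ∀ i : Fin n, ∀ hi : (i : ℕ) + 1 < n, c ⟨(i : ℕ) + 1, hi⟩ ≤ c i + 1

/-- A Ferrers diagram is strictly monotone if `c (i+1) > c i` whenever `c i > 0`. -/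
def DiagStrictlyMonotone (n : ℕ) (c : Fin n → ℕ) : Prop :=
  ∀ i : Fin n, ∀ hi : (i : ℕ) + 1 < n, 0 < c i → c i < c ⟨(i : ℕ) + 1, hi⟩

/-- A Ferrers diagram is initially convex if `c 1 ≤ 1` and `c (i+1) - c i ≤ 1` for all `i`. -/
def DiagInitiallyConvex (n : ℕ) (c : Fin n → ℕ) : Prop :=
  (∀ h : 0 < n, c ⟨0, h⟩ ≤ 1) ∧ DiagConvex n c

/-- `h` is an admissible `p`-height for the Ferrers diagram `c`: `p^h ∣ n`, `p^h ∣ c i` for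
all `i`, and `c (n-r) = c (n-s)` (1-indexed) whenever `r, s` lie in the same block
`{Q p^h, …, (Q+1) p^h - 1}`. -/
def HeightOK (p n h : ℕ) (c : Fin n → ℕ) : Prop :=
  p ^ h ∣ n ∧ (∀ i, p ^ h ∣ c i) ∧
    ∀ r s : Fin n, (r : ℕ) / p ^ h = (s : ℕ) / p ^ h →
      c ⟨n - 1 - (r : ℕ), by have := r.isLt; omega⟩ =
        c ⟨n - 1 - (s : ℕ), by have := s.isLt; omega⟩

/-- The `p`-height of a Ferrers diagram: the largest admissible `h`. -/
noncomputable def pHeight (p n : ℕ) (c : Fin n → ℕ) : ℕ :=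
  sSup {h | HeightOK p n h c}

/-- The `p`-contraction of a Ferrers diagram: `c'_i = c_{p^h i} / p^h` (1-indexed),
a diagram of order `n / p^h`, where `h` is the `p`-height. -/
noncomputable def pContraction (p n : ℕ) (c : Fin n → ℕ) :
    Fin (n / p ^ pHeight p n c) → ℕ :=
  fun i => colExt n c (p ^ pHeight p n c * ((i : ℕ) + 1) - 1) / p ^ pHeight p n c

/-- A Ferrers diagram is `p`-monotone if its `p`-contraction is monotone. -/
def IsPMonotone (p n : ℕ) (c : Fin n → ℕ) : Prop :=
  DiagMonotone (n / p ^ pHeight p n c) (pContraction p n c)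

/-- A Ferrers diagram is `p`-convex if its `p`-contraction is convex. -/
def IsPConvex (p n : ℕ) (c : Fin n → ℕ) : Prop :=
  DiagConvex (n / p ^ pHeight p n c) (pContraction p n c)

/-- A Ferrers diagram is strictly `p`-monotone if its `p`-contraction is strictly monotone. -/
def IsStrictlyPMonotone (p n : ℕ) (c : Fin n → ℕ) : Prop :=
  DiagStrictlyMonotone (n / p ^ pHeight p n c) (pContraction p n c)

/-- A Ferrers diagram is initially `p`-convex if its `p`-contraction is initially convex. -/
def IsInitiallyPConvex (p n : ℕ) (c : Fin n → ℕ) : Prop :=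
  DiagInitiallyConvex (n / p ^ pHeight p n c) (pContraction p n c)

/-- The adjoint Ferrers diagram: column `j+1` of `D^⊤` has `#{i : c i ≥ n - j}` dots. -/
def adjointDiag (n : ℕ) (c : Fin n → ℕ) : Fin n → ℕ :=
  fun j => (Finset.univ.filter (fun i : Fin n => n - (j : ℕ) ≤ c i)).card

/-- `|D ∩ Δ_{i+1}^n|`: the number of dots of `D` on the (i+1)-st diagonal (0-indexed `i`). -/
def diagDots (n : ℕ) (c : Fin n → ℕ) (i : ℕ) : ℕ :=
  ((Finset.range n).filter (fun r => r + i < n ∧ r < colExt n c (r + i))).card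

/-- The pair `(D, d)` is MDS-constructible if
`ν_min(D,d) = Σ_{i=1}^n max{0, |D ∩ Δ_i^n| - d + 1}`. -/
def IsMDSConstructibleP (n d : ℕ) (c : Fin n → ℕ) : Prop :=
  nuMin n d c = ∑ i ∈ Finset.range n, (diagDots n c i + 1 - d)

/-- if `(D, d)` is `j`-Singleton and `D' ⊆ D` is a Ferrers diagram of
order `n` with `D ∩ L_{n,d,j} = D' ∩ L_{n,d,j}`, then `(D', d)` is `j`-Singleton.
Here a point `(r, col)` (0-indexed) lies in `D` iff `r < c col`, and it lies in
`L_{n,d,j}` iff `r + 1 < d - j` or `n - j < col + 1` (1-indexed translation). -/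
theorem statement17 {n d j : ℕ} (hn : 1 ≤ n) (hd2 : 2 ≤ d) (hdn : d ≤ n) (hj : j < d)
    (c c' : Fin n → ℕ) (hc : IsFerrersDiagram n c) (hc' : IsFerrersDiagram n c')
    (hsub : ∀ i, c' i ≤ c i)
    (hL : ∀ r col : Fin n, ((r : ℕ) + 1 < d - j ∨ n - j < (col : ℕ) + 1) →
      ((r : ℕ) < c col ↔ (r : ℕ) < c' col))
    (hsing : nuMin n d c = nuJ n d j c) :
    nuMin n d c' = nuJ n d j c' := by
  -- pointwise bounds on column heights
  have hcle : ∀ i, i < n → colExt n c i ≤ n := by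
    intro i hi; simp only [colExt, dif_pos hi]; exact hc.2 _
  have hsub' : ∀ i, colExt n c' i ≤ colExt n c i := by
    intro i; unfold colExt; split
    · exact hsub _
    · exact le_refl 0
  -- where c' and c differ, the column is tall enough
  have key : ∀ i, i < n → colExt n c' i < colExt n c i → d - j ≤ colExt n c' i + 1 := by
    intro i hi hlt
    by_contra hcon
    push_neg at hcon
    have hr : colExt n c' i < n := lt_of_lt_of_le hlt (hcle i hi)
    have h2 := hL ⟨colExt n c' i, hr⟩ ⟨i, hi⟩ (Or.inl (show colExt n c' i + 1 < d - j by omega))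
    have e1 : colExt n c i = c ⟨i, hi⟩ := dif_pos hi
    have e2 : colExt n c' i = c' ⟨i, hi⟩ := dif_pos hi
    have e3 : (((⟨colExt n c' i, hr⟩ : Fin n)) : ℕ) = colExt n c' i := rfl
    rw [e3] at h2
    omega
  -- columns beyond n - j coincide
  have heq : ∀ i, n - j ≤ i → colExt n c i = colExt n c' i := by
    intro i hle
    by_cases hi : i < n
    · by_contra hne
      have hlt : colExt n c' i < colExt n c i := lt_of_le_of_ne (hsub' i) fun h => hne h.symm
      have hr : colExt n c' i < n := lt_of_lt_of_le hlt (hcle i hi)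
      have h2 := hL ⟨colExt n c' i, hr⟩ ⟨i, hi⟩ (Or.inr (show n - j < i + 1 by omega))
      have e1 : colExt n c i = c ⟨i, hi⟩ := dif_pos hi
      have e2 : colExt n c' i = c' ⟨i, hi⟩ := dif_pos hi
      have e3 : (((⟨colExt n c' i, hr⟩ : Fin n)) : ℕ) = colExt n c' i := rfl
      rw [e3] at h2
      omega
    · simp [colExt, hi]
  set E : ℕ := ∑ i ∈ Finset.range n, (colExt n c i - colExt n c' i) with hEdef
  have hE1 : nuJ n d j c = nuJ n d j c' + E := by
    have hEeq : E = ∑ i ∈ Finset.range (n - j), (colExt n c i - colExt n c' i) := by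
      rw [hEdef]
      refine (Finset.sum_subset (Finset.range_subset_range.2 (by omega)) ?_).symm
      intro x hx hnx
      simp only [Finset.mem_range] at hx hnx
      have := heq x (by omega)
      omega
    rw [hEeq]
    unfold nuJ
    rw [← Finset.sum_add_distrib]
    refine Finset.sum_congr rfl fun i hi => ?_
    simp only [Finset.mem_range] at hi
    have hin : i < n := by omega
    have hk := key i hin
    have h1 := hsub' i
    omega
  have hE2 : ∀ j' < d, nuJ n d j' c ≤ nuJ n d j' c' + E := by
    intro j' hj'
    unfold nuJ
    calc ∑ i ∈ Finset.range (n - j'), (colExt n c i + 1 + j' - d)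
        ≤ ∑ i ∈ Finset.range (n - j'),
            ((colExt n c' i + 1 + j' - d) + (colExt n c i - colExt n c' i)) :=
          Finset.sum_le_sum fun i _ => by have := hsub' i; omega
      _ = (∑ i ∈ Finset.range (n - j'), (colExt n c' i + 1 + j' - d)) +
            ∑ i ∈ Finset.range (n - j'), (colExt n c i - colExt n c' i) :=
          Finset.sum_add_distrib
      _ ≤ (∑ i ∈ Finset.range (n - j'), (colExt n c' i + 1 + j' - d)) + E := by
          refine Nat.add_le_add_left ?_ _
          exact Finset.sum_le_sum_of_subset (Finset.range_subset_range.2 (by omega))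
  have hmin : ∀ j' < d, nuJ n d j c ≤ nuJ n d j' c := by
    intro j' h
    rw [← hsing]
    exact Nat.sInf_le ⟨j', h, rfl⟩
  have hlow : ∀ j' < d, nuJ n d j c' ≤ nuJ n d j' c' := by
    intro j' h
    have h2 := hE2 j' h
    have h3 := hmin j' h
    omega
  apply le_antisymm
  · exact Nat.sInf_le ⟨j, hj, rfl⟩
  · refine le_csInf ⟨_, j, hj, rfl⟩ ?_
    rintro k ⟨j', hj', rfl⟩
    exact hlow j' hj'
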